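/- For every n ≥ 1, Euler's totient function satisfies φ(n) = Σ_{k=1}^{n} (Σ_{d|n} p(d−k) μ(n/d)) · B_{k−1}(φ), where for m ≥ 0, B_m(φ) := m+1 − Σ_{b∈{1,−1}} Σ_{k=1}^{⌊(√(24m+1)−b)/6⌋} (−1)^{k+1} (m+1−k(3k+b)/2). -/

import Mathlib

/-!
STATEMENT 12: For every `n ≥ 1`,
`φ(n) = ∑_{k=1}^n (∑_{d ∣ n} p(d-k) μ(n/d)) · B_{k-1}(φ)`,
where for `m ≥ 0`,
`B_m(φ) := m+1 - ∑_{b = ±1} ∑_{k ≥ 1, k(3k+b)/2 ≤ m} (-1)^(k+1) (m+1-k(3k+b)/2)`,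
with `p(m) = 0` for `m < 0`.
-/

open ArithmeticFunction

/-- Euler's partition function `p(n)` (number of partitions of `n`), for `n ≥ 0`. -/
def partitionFun (n : ℕ) : ℕ := Fintype.card (Nat.Partition n)

/-- `B_m(φ) := m+1 - ∑_{b = ±1} ∑_{k ≥ 1, k(3k+b)/2 ≤ m} (-1)^(k+1) (m+1-k(3k+b)/2)`. -/
def Bphi (m : ℕ) : ℤ :=
  ((m : ℤ) + 1) -
    ∑ b ∈ ({1, -1} : Finset ℤ), ∑ k ∈ Finset.Icc 1 m,
      if (k : ℤ) * (3 * k + b) ≤ 2 * m then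
        (-1 : ℤ) ^ (k + 1) * ((m : ℤ) + 1 - (k : ℤ) * (3 * k + b) / 2)
      else 0

def pz (x : ℤ) : ℤ := if 0 ≤ x then (partitionFun x.toNat : ℤ) else 0

def gp (j : ℤ) : ℤ := j * (3 * j + 1) / 2

def sg (j : ℤ) : ℤ := (-1) ^ j.natAbs

lemma two_gp (j : ℤ) : 2 * gp j = j * (3 * j + 1) := by
  apply Int.mul_ediv_cancel'
  rcases Int.even_or_odd j with ⟨k, hk⟩ | ⟨k, hk⟩
  · exact ⟨k * (3*j+1), by subst hk; ring⟩
  · exact ⟨j * (3*k+2), by subst hk; ring⟩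

lemma natAbs_le_gp (j : ℤ) : (j.natAbs : ℤ) ≤ gp j := by
  have h := two_gp j
  rcases le_or_gt 0 j with hj | hj
  · rw [Int.natAbs_of_nonneg hj]; nlinarith [sq_nonneg j, mul_self_nonneg j]
  · rw [Int.ofNat_natAbs_of_nonpos hj.le]; nlinarith [mul_self_nonneg (j+1)]

lemma gp_nonneg (j : ℤ) : 0 ≤ gp j := le_trans (by positivity) (natAbs_le_gp j)

lemma sg_add_one (j : ℤ) : sg (j + 1) = - sg j := by
  rcases le_or_gt 0 j with hj | hj
  · have h : (j+1).natAbs = j.natAbs + 1 := by omega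
    rw [sg, sg, h, pow_succ]; ring
  · have h : j.natAbs = (j+1).natAbs + 1 := by omega
    rw [sg, sg, h, pow_succ]; ring

lemma sg_sub_one (j : ℤ) : sg (j - 1) = - sg j := by
  have := sg_add_one (j - 1); simp at this; rw [this]; ring

lemma sg_zero : sg 0 = 1 := rfl

lemma partitionFun_zero : partitionFun 0 = 1 := by unfold partitionFun; simp

lemma pz_neg {x : ℤ} (h : x < 0) : pz x = 0 := by unfold pz; rw [if_neg (by omega)]

lemma pz_coe (k : ℕ) : pz k = partitionFun k := by unfold pz; simp

/-- partitions of k as a Finset of multisets -/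
def partsOf (k : ℕ) : Finset (Multiset ℕ) :=
  (Finset.univ : Finset (Nat.Partition k)).image Nat.Partition.parts

lemma mem_partsOf {k : ℕ} {m : Multiset ℕ} :
    m ∈ partsOf k ↔ m.sum = k ∧ ∀ x ∈ m, 0 < x := by
  constructor
  · rintro h
    simp only [partsOf, Finset.mem_image] at h
    obtain ⟨p, -, rfl⟩ := h
    exact ⟨p.parts_sum, fun x hx => p.parts_pos hx⟩
  · rintro ⟨h1, h2⟩
    simp only [partsOf, Finset.mem_image]
    exact ⟨⟨m, fun {x} hx => h2 x hx, h1⟩, Finset.mem_univ _, rfl⟩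

lemma card_partsOf (k : ℕ) : (partsOf k).card = partitionFun k := by
  rw [partsOf, Finset.card_image_of_injective _ (fun p q h => Nat.Partition.ext h),
    Finset.card_univ, partitionFun]

/-- the BZ involution domain -/
noncomputable def Spart (n : ℕ) : Finset (ℤ × Multiset ℕ) :=
  (Finset.Icc (-(n:ℤ)) (n:ℤ)).biUnion fun j =>
    if gp j ≤ (n:ℤ) then (partsOf ((n - gp j).toNat)).image (fun m => (j, m)) else ∅

lemma mem_Spart {n : ℕ} {j : ℤ} {m : Multiset ℕ} :
    (j, m) ∈ Spart n ↔ (m.sum : ℤ) + gp j = n ∧ ∀ x ∈ m, 0 < x := by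
  constructor
  · intro h
    simp only [Spart, Finset.mem_biUnion] at h
    obtain ⟨j', hj', hm⟩ := h
    by_cases hg : gp j' ≤ (n:ℤ)
    · rw [if_pos hg, Finset.mem_image] at hm
      obtain ⟨m', hm', he⟩ := hm
      obtain ⟨h5, h6⟩ := Prod.mk.injEq .. ▸ he
      subst h5; subst h6
      rw [mem_partsOf] at hm'
      refine ⟨?_, hm'.2⟩
      have := hm'.1
      omega
    · rw [if_neg hg] at hm; exact absurd hm (Finset.notMem_empty _)
  · rintro ⟨h1, h2⟩
    have hg : gp j ≤ (n:ℤ) := by have := Nat.cast_nonneg (α := ℤ) m.sum; omega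
    have hj : j ∈ Finset.Icc (-(n:ℤ)) (n:ℤ) := by
      have := natAbs_le_gp j
      simp only [Finset.mem_Icc]; omega
    simp only [Spart, Finset.mem_biUnion]
    refine ⟨j, hj, ?_⟩
    rw [if_pos hg, Finset.mem_image]
    exact ⟨m, mem_partsOf.2 ⟨by omega, fun x hx => h2 x hx⟩, rfl⟩

lemma sum_Spart (n : ℕ) :
    ∑ x ∈ Spart n, sg x.1 = ∑ j ∈ Finset.Icc (-(n:ℤ)) (n:ℤ), sg j * pz (n - gp j) := by
  rw [Spart, Finset.sum_biUnion]
  · apply Finset.sum_congr rfl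
    intro j hj
    by_cases hg : gp j ≤ (n:ℤ)
    · rw [if_pos hg, Finset.sum_image (by intro a ha b hb h; injection h)]
      simp only [Finset.sum_const, card_partsOf, nsmul_eq_mul]
      rw [pz, if_pos (by omega)]
      push_cast
      ring
    · rw [if_neg hg, pz_neg (by omega)]
      simp
  · intro a ha b hb hab
    apply Finset.disjoint_left.2
    intro x hx hx2
    apply hab
    simp only at hx hx2
    by_cases h1 : gp a ≤ (n:ℤ)
    · rw [if_pos h1, Finset.mem_image] at hx
      obtain ⟨m1, -, rfl⟩ := hx
      by_cases h2 : gp b ≤ (n:ℤ)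
      · rw [if_pos h2, Finset.mem_image] at hx2
        obtain ⟨m2, -, he⟩ := hx2
        injection he with h3 h4
        rw [h3]
      · simp [if_neg h2] at hx2
    · simp [if_neg h1] at hx

lemma sup_mem_of_ne_zero {m : Multiset ℕ} (h : m ≠ 0) : m.sup ∈ m := by
  induction m using Multiset.induction with
  | empty => simp at h
  | cons a s ih =>
    rw [Multiset.sup_cons]
    rcases eq_or_ne s 0 with rfl | hs
    · simp
    · rcases le_total a s.sup with h1 | h1
      · rw [sup_eq_right.2 h1]; exact Multiset.mem_cons_of_mem (ih hs)
      · rw [sup_eq_left.2 h1]; exact Multiset.mem_cons_self ..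

lemma card_le_sum_of_pos {m : Multiset ℕ} (h : ∀ x ∈ m, 0 < x) :
    Multiset.card m ≤ m.sum := by
  induction m using Multiset.induction with
  | empty => simp
  | cons a s ih =>
    simp only [Multiset.card_cons, Multiset.sum_cons]
    have h1 : 0 < a := h a (Multiset.mem_cons_self ..)
    have h2 := ih (fun x hx => h x (Multiset.mem_cons_of_mem hx))
    omega

lemma sum_map_pred {m : Multiset ℕ} (h : ∀ x ∈ m, 0 < x) :
    (m.map (· - 1)).sum = m.sum - Multiset.card m := by
  induction m using Multiset.induction with
  | empty => simp
  | cons a s ih =>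
    simp only [Multiset.map_cons, Multiset.sum_cons, Multiset.card_cons]
    have h1 : 0 < a := h a (Multiset.mem_cons_self ..)
    have h2 := ih (fun x hx => h x (Multiset.mem_cons_of_mem hx))
    have h3 := card_le_sum_of_pos (fun x hx => h x (Multiset.mem_cons_of_mem hx))
    omega

lemma sum_filter_pos (s : Multiset ℕ) : (s.filter (0 < ·)).sum = s.sum := by
  conv_rhs => rw [← Multiset.filter_add_not (0 < ·) s]
  rw [Multiset.sum_add, Multiset.sum_eq_zero (s := s.filter fun a => ¬ 0 < a)
    (fun x hx => by have := (Multiset.mem_filter.1 hx).2; omega)]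
  omega

lemma sum_erase_nat {m : Multiset ℕ} {a : ℕ} (h : a ∈ m) :
    (m.erase a).sum = m.sum - a ∧ a ≤ m.sum := by
  have h1 : a ::ₘ m.erase a = m := Multiset.cons_erase h
  have h2 : (a ::ₘ m.erase a).sum = a + (m.erase a).sum := Multiset.sum_cons ..
  rw [h1] at h2
  omega

/-- The Bressoud–Zeilberger involution. -/
def Phi : ℤ × Multiset ℕ → ℤ × Multiset ℕ := fun x =>
  let j := x.1
  let m := x.2
  let t : ℤ := Multiset.card m
  let l : ℕ := m.sup
  if (l : ℤ) ≤ t + 3 * j then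
    (j - 1, (if 0 < t + 3 * j - 1 then {(t + 3 * j - 1).toNat} else 0)
      + (m.map (· - 1)).filter (0 < ·))
  else
    (j + 1, (m.erase l).map (· + 1) +
      Multiset.replicate (if m = 0 then (-3 * j - 2).toNat else ((l : ℤ) - t - 3 * j - 1).toNat) 1)

lemma Phi_fst (j : ℤ) (m : Multiset ℕ) :
    (Phi (j, m)).1 = j - 1 ∨ (Phi (j, m)).1 = j + 1 := by
  simp only [Phi]; split <;> simp

lemma gp_step (j : ℤ) : 2 * gp j - 2 * gp (j - 1) = 6 * j - 2 := by
  rw [two_gp, two_gp]; ring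

lemma gp_step' (j : ℤ) : 2 * gp (j + 1) - 2 * gp j = 6 * j + 4 := by
  rw [two_gp, two_gp]; ring

lemma caseA {n : ℕ} (hn : 1 ≤ n) {j : ℤ} {m : Multiset ℕ}
    (hsum : (m.sum : ℤ) + gp j = n) (hpos : ∀ x ∈ m, 0 < x)
    (hA : (m.sup : ℤ) ≤ Multiset.card m + 3 * j) :
    Phi (j, m) ∈ Spart n ∧ Phi (Phi (j, m)) = (j, m) := by
  have hPhi : Phi (j, m) = (j - 1,
      (if 0 < (Multiset.card m : ℤ) + 3 * j - 1
        then {((Multiset.card m : ℤ) + 3 * j - 1).toNat} else 0)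
      + (m.map (· - 1)).filter (0 < ·)) := by
    simp only [Phi]; rw [if_pos hA]
  set t : ℤ := (Multiset.card m : ℤ) with ht
  set l : ℕ := m.sup with hl
  have hcs : Multiset.card m ≤ m.sum := card_le_sum_of_pos hpos
  have hd := gp_step j
  set F : Multiset ℕ := (m.map (· - 1)).filter (0 < ·) with hFdef
  have hF : F = (m.filter (2 ≤ ·)).map (· - 1) := by
    rw [hFdef, Multiset.filter_map]
    exact congrArg _ (Multiset.filter_congr (fun x _ => by
      simp only [Function.comp_apply]; omega))
  have hFsum : F.sum = m.sum - Multiset.card m := by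
    rw [hFdef, sum_filter_pos, sum_map_pred hpos]
  have hFcard : Multiset.card F = Multiset.card (m.filter (2 ≤ ·)) := by
    rw [hF, Multiset.card_map]
  have hacard : Multiset.card (m.filter (2 ≤ ·)) ≤ Multiset.card m :=
    Multiset.card_le_card (Multiset.filter_le _ _)
  have hFpos : ∀ x ∈ F, 0 < x := fun x hx => (Multiset.mem_filter.1 hx).2
  have hFle : ∀ x ∈ F, (x : ℤ) ≤ t + 3 * j - 1 := by
    intro x hx
    obtain ⟨y, hy, rfl⟩ := Multiset.mem_map.1 (Multiset.mem_filter.1 hx).1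
    have h1 : y ≤ l := Multiset.le_sup hy
    have h2 : 0 < y := hpos y hy
    have h3 : (l : ℤ) ≤ t + 3 * j := hA
    omega
  by_cases h1 : 0 < t + 3 * j - 1
  · -- main subcase: new part is positive
    rw [if_pos h1, Multiset.singleton_add] at hPhi
    set v : ℕ := (t + 3 * j - 1).toNat with hv
    have hvz : (v : ℤ) = t + 3 * j - 1 := Int.toNat_of_nonneg (by omega)
    -- membership
    have hmem : Phi (j, m) ∈ Spart n := by
      rw [hPhi, mem_Spart]
      constructor
      · have : ((v ::ₘ F).sum : ℤ) = v + F.sum := by rw [Multiset.sum_cons]; push_cast; ring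
        rw [this, hvz]
        have : (F.sum : ℤ) = (m.sum : ℤ) - t := by rw [hFsum]; push_cast [hcs]; ring
        omega
      · intro x hx
        rcases Multiset.mem_cons.1 hx with rfl | hx
        · omega
        · exact hFpos x hx
    refine ⟨hmem, ?_⟩
    -- now compute Phi of the image
    rw [hPhi]
    have hsupF : F.sup ≤ v := Multiset.sup_le.2 (fun b hb => by have := hFle b hb; omega)
    have hsupM : (v ::ₘ F).sup = v := by
      rw [Multiset.sup_cons, sup_eq_left.2 hsupF]
    have hcardM : (Multiset.card (v ::ₘ F) : ℤ) = Multiset.card F + 1 := by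
      rw [Multiset.card_cons]; push_cast; ring
    have hB2 : ¬ (((v ::ₘ F).sup : ℤ) ≤ Multiset.card (v ::ₘ F) + 3 * (j - 1)) := by
      rw [hsupM, hcardM, hvz]
      have : (Multiset.card F : ℤ) ≤ t := by rw [hFcard, ht]; exact_mod_cast hacard
      omega
    have hPhi2 : Phi (j - 1, v ::ₘ F) = (j - 1 + 1,
        ((v ::ₘ F).erase ((v ::ₘ F).sup)).map (· + 1) +
        Multiset.replicate (if (v ::ₘ F) = 0 then (-3 * (j-1) - 2).toNat
          else (((v ::ₘ F).sup : ℤ) - Multiset.card (v ::ₘ F) - 3 * (j-1) - 1).toNat) 1) := by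
      simp only [Phi]; rw [if_neg hB2]
    rw [hPhi2, if_neg (Multiset.cons_ne_zero)]
    congr 1
    · ring
    · rw [hsupM, Multiset.erase_cons_head, hcardM, hvz]
      have hc : (t + 3 * j - 1 - ((Multiset.card F : ℤ) + 1) - 3 * (j - 1) - 1).toNat
          = Multiset.card m - Multiset.card (m.filter (2 ≤ ·)) := by
        rw [hFcard, ht]
        have : (Multiset.card (m.filter (2 ≤ ·)) : ℤ) ≤ (Multiset.card m : ℤ) := by
          exact_mod_cast hacard
        omega
      rw [hc]
      have hmap : Multiset.map (· + 1) F = m.filter (2 ≤ ·) := by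
        rw [hF, Multiset.map_map]
        have he : ∀ x ∈ m.filter (2 ≤ ·), ((fun x => x + 1) ∘ fun x => x - 1) x = _root_.id x := by
          intro x hx
          have := (Multiset.mem_filter.1 hx).2
          simp only [Function.comp_apply, _root_.id]
          omega
        rw [Multiset.map_congr rfl he, Multiset.map_id]
      rw [hmap]
      have hrep : Multiset.replicate (Multiset.card m - Multiset.card (m.filter (2 ≤ ·))) 1
          = m.filter (fun x => ¬ 2 ≤ x) := by
        symm
        rw [Multiset.eq_replicate]
        constructor
        · have := congrArg (Multiset.card) (Multiset.filter_add_not (2 ≤ ·) m)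
          rw [Multiset.card_add] at this
          omega
        · intro b hb
          have h2 := (Multiset.mem_filter.1 hb).2
          have h3 := hpos b (Multiset.mem_filter.1 hb).1
          omega
      rw [hrep, Multiset.filter_add_not]
  · -- degenerate subcase : t + 3j = 1, m is all ones
    have hm0 : m ≠ 0 ∨ m = 0 := (em _).symm.imp id id
    have ht1 : t + 3 * j = 1 := by
      rcases le_or_gt (t + 3 * j) 0 with h2 | h2
      · exfalso
        have hl0 : (l : ℤ) ≤ 0 := le_trans hA h2
        have hmz : m = 0 := by
          by_contra hmz
          have := hpos _ (sup_mem_of_ne_zero hmz)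
          omega
        have ht0 : t = 0 := by rw [ht, hmz]; simp
        have hj0 : j = 0 := by omega
        rw [hmz, hj0] at hsum
        have : gp 0 = 0 := by have := two_gp 0; omega
        simp [this] at hsum
        omega
      · omega
    have hones : ∀ x ∈ m, x = 1 := by
      intro x hx
      have h2 : x ≤ l := Multiset.le_sup hx
      have h3 := hpos x hx
      have : (l:ℤ) ≤ 1 := by omega
      omega
    have hm : m = Multiset.replicate (Multiset.card m) 1 :=
      Multiset.eq_replicate.2 ⟨rfl, hones⟩
    have hF0 : F = 0 := by
      rw [hFdef, Multiset.filter_eq_nil.2]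
      intro a ha
      obtain ⟨y, hy, rfl⟩ := Multiset.mem_map.1 ha
      have := hones y hy
      omega
    rw [if_neg h1, hF0, add_zero] at hPhi
    have hsum1 : (m.sum : ℤ) = t := by
      conv_lhs => rw [hm]
      rw [Multiset.sum_replicate]
      push_cast
      simp [ht]
    have hmem : Phi (j, m) ∈ Spart n := by
      rw [hPhi, mem_Spart]
      exact ⟨by simp; omega, by simp⟩
    refine ⟨hmem, ?_⟩
    rw [hPhi]
    have hj0 : j ≤ 0 := by omega
    have hguard : ¬ (((0:Multiset ℕ).sup : ℤ) ≤ Multiset.card (0:Multiset ℕ) + 3 * (j - 1)) := by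
      simp
      omega
    have hPhi2 : Phi (j - 1, (0:Multiset ℕ)) = (j - 1 + 1,
        (((0:Multiset ℕ)).erase ((0:Multiset ℕ).sup)).map (· + 1) +
        Multiset.replicate ((-3 * (j-1) - 2).toNat) 1) := by
      simp only [Phi]; rw [if_neg hguard, if_pos (by trivial)]
    rw [hPhi2]
    congr 1
    · ring
    · simp only [Multiset.erase_zero, Multiset.map_zero, zero_add]
      have : (-3 * (j - 1) - 2).toNat = Multiset.card m := by omega
      rw [this]
      exact hm.symm

lemma caseB {n : ℕ} (hn : 1 ≤ n) {j : ℤ} {m : Multiset ℕ}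
    (hsum : (m.sum : ℤ) + gp j = n) (hpos : ∀ x ∈ m, 0 < x)
    (hB : ¬ ((m.sup : ℤ) ≤ Multiset.card m + 3 * j)) :
    Phi (j, m) ∈ Spart n ∧ Phi (Phi (j, m)) = (j, m) := by
  have hd := gp_step' j
  rcases eq_or_ne m 0 with rfl | hm0
  · -- empty multiset case
    have hj : j ≤ -1 := by
      simp only [Multiset.sup_zero, Multiset.card_zero] at hB
      simp at hB
      omega
    have hsum0 : gp j = (n : ℤ) := by simpa using hsum
    have hPhi : Phi (j, (0:Multiset ℕ)) = (j + 1, Multiset.replicate ((-3 * j - 2).toNat) 1) := by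
      simp only [Phi]
      rw [if_neg (by simp; omega)]
      simp
    have hcz : ((-3 * j - 2).toNat : ℤ) = -3 * j - 2 := Int.toNat_of_nonneg (by omega)
    have hmem : Phi (j, (0:Multiset ℕ)) ∈ Spart n := by
      rw [hPhi, mem_Spart]
      constructor
      · rw [Multiset.sum_replicate]
        simp only [smul_eq_mul, mul_one]
        omega
      · intro x hx
        rw [Multiset.eq_of_mem_replicate hx]
        omega
    refine ⟨hmem, ?_⟩
    rw [hPhi]
    set c : ℕ := (-3 * j - 2).toNat with hc
    have hcpos : 1 ≤ c := by omega
    have hsupr : (Multiset.replicate c 1 : Multiset ℕ).sup = 1 := by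
      apply le_antisymm
      · exact Multiset.sup_le.2 (fun b hb => by rw [Multiset.eq_of_mem_replicate hb])
      · exact Multiset.le_sup (Multiset.mem_replicate.2 ⟨by omega, rfl⟩)
    have hcardr : Multiset.card (Multiset.replicate c 1 : Multiset ℕ) = c :=
      Multiset.card_replicate ..
    have hguard : (((Multiset.replicate c 1 : Multiset ℕ).sup : ℤ))
        ≤ (Multiset.card (Multiset.replicate c 1 : Multiset ℕ) : ℤ) + 3 * (j + 1) := by
      rw [hsupr, hcardr]
      omega
    have hPhi2 : Phi (j + 1, (Multiset.replicate c 1 : Multiset ℕ)) = (j + 1 - 1,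
        (if 0 < (Multiset.card (Multiset.replicate c 1 : Multiset ℕ) : ℤ) + 3 * (j + 1) - 1
          then {((Multiset.card (Multiset.replicate c 1 : Multiset ℕ) : ℤ)
            + 3 * (j + 1) - 1).toNat} else 0)
        + ((Multiset.replicate c 1 : Multiset ℕ).map (· - 1)).filter (0 < ·)) := by
      simp only [Phi]; rw [if_pos hguard]
    rw [hPhi2]
    have h2 : ¬ (0 < (Multiset.card (Multiset.replicate c 1 : Multiset ℕ) : ℤ)
        + 3 * (j + 1) - 1) := by
      rw [hcardr]; omega
    rw [if_neg h2, Multiset.map_replicate]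
    have h3 : (Multiset.replicate c (1 - 1) : Multiset ℕ).filter (0 < ·) = 0 :=
      Multiset.filter_eq_nil.2 (fun a ha => by rw [Multiset.eq_of_mem_replicate ha]; omega)
    rw [h3]
    simp
  · -- nonempty case
    set t : ℤ := (Multiset.card m : ℤ) with ht
    set l : ℕ := m.sup with hl
    have hlm : l ∈ m := sup_mem_of_ne_zero hm0
    have hl1 : 1 ≤ l := hpos l hlm
    have hcard1 : 0 < Multiset.card m := Multiset.card_pos.2 hm0
    have hesum := sum_erase_nat hlm
    have hecard : Multiset.card (m.erase l) = Multiset.card m - 1 := by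
      rw [Multiset.card_erase_of_mem hlm, Nat.pred_eq_sub_one]
    set cz : ℤ := (l : ℤ) - t - 3 * j - 1 with hczdef
    have hcz0 : 0 ≤ cz := by omega
    set c : ℕ := cz.toNat with hc
    have hcc : (c : ℤ) = cz := Int.toNat_of_nonneg hcz0
    have hPhi : Phi (j, m) = (j + 1, (m.erase l).map (· + 1) + Multiset.replicate c 1) := by
      simp only [Phi]; rw [if_neg hB, if_neg hm0]
    have h4 : ((m.erase l).map (· + 1)).sum
        = (m.erase l).sum + Multiset.card (m.erase l) := by
      induction (m.erase l) using Multiset.induction with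
      | empty => simp
      | cons a s ih =>
        simp only [Multiset.map_cons, Multiset.sum_cons, Multiset.card_cons] at *
        omega
    have hMsum : (((m.erase l).map (· + 1) + Multiset.replicate c 1).sum : ℤ)
        = (m.sum : ℤ) - 3 * j - 2 := by
      rw [Multiset.sum_add, Multiset.sum_replicate, smul_eq_mul, mul_one]
      omega
    have hmem : Phi (j, m) ∈ Spart n := by
      rw [hPhi, mem_Spart]
      constructor
      · rw [hMsum]; omega
      · intro x hx
        rcases Multiset.mem_add.1 hx with hx | hx
        · obtain ⟨y, hy, rfl⟩ := Multiset.mem_map.1 hx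
          omega
        · rw [Multiset.eq_of_mem_replicate hx]; omega
    refine ⟨hmem, ?_⟩
    rw [hPhi]
    set M : Multiset ℕ := (m.erase l).map (· + 1) + Multiset.replicate c 1 with hM
    have hcardM : (Multiset.card M : ℤ) = (l : ℤ) - 3 * j - 2 := by
      rw [hM, Multiset.card_add, Multiset.card_map, Multiset.card_replicate]
      omega
    have hsupMn : M.sup ≤ l + 1 := by
      apply Multiset.sup_le.2
      intro b hb
      rcases Multiset.mem_add.1 hb with hb | hb
      · obtain ⟨y, hy, rfl⟩ := Multiset.mem_map.1 hb
        have : y ≤ l := Multiset.le_sup (Multiset.mem_of_mem_erase hy)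
        omega
      · rw [Multiset.eq_of_mem_replicate hb]; omega
    have hsupM : ((M.sup : ℤ)) ≤ (l : ℤ) + 1 := by exact_mod_cast hsupMn
    have hguard : ((M.sup : ℤ)) ≤ (Multiset.card M : ℤ) + 3 * (j + 1) := by omega
    have hPhi2 : Phi (j + 1, M) = (j + 1 - 1,
        (if 0 < (Multiset.card M : ℤ) + 3 * (j + 1) - 1
          then {((Multiset.card M : ℤ) + 3 * (j + 1) - 1).toNat} else 0)
        + (M.map (· - 1)).filter (0 < ·)) := by
      simp only [Phi]; rw [if_pos hguard]
    rw [hPhi2]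
    have h5 : 0 < (Multiset.card M : ℤ) + 3 * (j + 1) - 1 := by omega
    rw [if_pos h5]
    have h6 : ((Multiset.card M : ℤ) + 3 * (j + 1) - 1).toNat = l := by omega
    rw [h6]
    have h7 : (M.map (· - 1)).filter (0 < ·) = m.erase l := by
      rw [hM, Multiset.map_add, Multiset.map_map, Multiset.map_replicate]
      have h8 : Multiset.map ((fun x => x - 1) ∘ fun x => x + 1) (m.erase l) = m.erase l := by
        have he : ∀ x ∈ m.erase l, ((fun x => x - 1) ∘ fun x => x + 1) x = _root_.id x := by
          intro x hx
          simp only [Function.comp_apply, _root_.id, Nat.add_sub_cancel]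
        rw [Multiset.map_congr rfl he, Multiset.map_id]
      rw [h8, Multiset.filter_add]
      have h9 : (m.erase l).filter (0 < ·) = m.erase l :=
        Multiset.filter_eq_self.2 (fun x hx => hpos x (Multiset.mem_of_mem_erase hx))
      have h10 : (Multiset.replicate c (1 - 1) : Multiset ℕ).filter (0 < ·) = 0 :=
        Multiset.filter_eq_nil.2 (fun a ha => by rw [Multiset.eq_of_mem_replicate ha]; omega)
      rw [h9, h10, add_zero]
    rw [h7, Multiset.singleton_add, Multiset.cons_erase hlm]
    congr 1
    omega

lemma BZ (n : ℕ) (hn : 1 ≤ n) :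
    ∑ j ∈ Finset.Icc (-(n:ℤ)) (n:ℤ), sg j * pz ((n:ℤ) - gp j) = 0 := by
  rw [← sum_Spart]
  have key : ∀ a ∈ Spart n, Phi a ∈ Spart n ∧ Phi (Phi a) = a := by
    rintro ⟨j, m⟩ ha
    rw [mem_Spart] at ha
    by_cases hA : ((m.sup : ℤ) ≤ Multiset.card m + 3 * j)
    · exact caseA hn ha.1 ha.2 hA
    · exact caseB hn ha.1 ha.2 hA
  apply Finset.sum_involution (fun x _ => Phi x)
  · rintro ⟨j, m⟩ ha
    rcases Phi_fst j m with h | h <;> rw [h]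
    · rw [sg_sub_one]; ring
    · rw [sg_add_one]; ring
  · rintro ⟨j, m⟩ ha hne
    intro hcon
    rcases Phi_fst j m with h | h <;> rw [hcon] at h <;> simp at h <;> omega
  · intro a ha
    exact (key a ha).1
  · intro a ha
    exact (key a ha).2

lemma Z_eval (n : ℕ) (X : ℤ) (hX : (n:ℤ) ≤ X) :
    ∑ j ∈ Finset.Icc (-X) X, sg j * pz ((n:ℤ) - gp j) = if n = 0 then 1 else 0 := by
  have hsub : Finset.Icc (-(n:ℤ)) (n:ℤ) ⊆ Finset.Icc (-X) X :=
    Finset.Icc_subset_Icc (by omega) hX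
  rw [← Finset.sum_subset hsub (fun j hj hj2 => ?_)]
  · rcases Nat.eq_zero_or_pos n with rfl | hn
    · simp only [Nat.cast_zero, neg_zero, Finset.Icc_self, Finset.sum_singleton]
      have hg : gp 0 = 0 := by have := two_gp 0; omega
      rw [hg, sg_zero]
      simp [pz, partitionFun_zero]
    · rw [BZ n hn, if_neg (by omega)]
  · have h1 : (n : ℤ) < (j.natAbs : ℤ) := by
      simp only [Finset.mem_Icc] at hj hj2
      omega
    rw [pz_neg (by have := natAbs_le_gp j; omega), mul_zero]

lemma sum_Icc_symm (m : ℕ) (f : ℤ → ℤ) :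
    ∑ j ∈ Finset.Icc (-(m:ℤ)) (m:ℤ), f j
    = f 0 + (∑ k ∈ Finset.Icc 1 m, f (k:ℤ)) + (∑ k ∈ Finset.Icc 1 m, f (-(k:ℤ))) := by
  induction m with
  | zero => simp
  | succ p ih =>
    have h1 : Finset.Icc (-((p+1:ℕ):ℤ)) ((p+1:ℕ):ℤ)
        = insert (-((p+1:ℕ):ℤ)) (insert ((p+1:ℕ):ℤ) (Finset.Icc (-(p:ℕ):ℤ) (p:ℕ))) := by
      ext x
      simp only [Finset.mem_Icc, Finset.mem_insert]
      push_cast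
      omega
    rw [h1, Finset.sum_insert (by simp only [Finset.mem_insert, Finset.mem_Icc]; push_cast; omega),
      Finset.sum_insert (by simp only [Finset.mem_Icc]; push_cast; omega), ih,
      Finset.sum_Icc_succ_top (by omega : 1 ≤ p + 1) (fun k : ℕ => f (k:ℤ)),
      Finset.sum_Icc_succ_top (by omega : 1 ≤ p + 1) (fun k : ℕ => f (-(k:ℤ)))]
    push_cast
    ring

lemma Bphi_eq (m : ℕ) :
    Bphi m = ∑ j ∈ Finset.Icc (-(m:ℤ)) (m:ℤ),
      sg j * (if gp j ≤ (m:ℤ) then ((m:ℤ) + 1 - gp j) else 0) := by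
  rw [sum_Icc_symm m (fun j => sg j * (if gp j ≤ (m:ℤ) then ((m:ℤ) + 1 - gp j) else 0))]
  have hg0 : gp 0 = 0 := by have := two_gp 0; omega
  have h0 : sg 0 * (if gp 0 ≤ (m:ℤ) then ((m:ℤ) + 1 - gp 0) else 0) = (m:ℤ) + 1 := by
    rw [sg_zero, hg0, if_pos (by positivity)]
    ring
  rw [h0, Bphi, Finset.sum_pair (by norm_num : (1:ℤ) ≠ -1)]
  have hpos' : ∀ k ∈ Finset.Icc 1 m,
      (if (k : ℤ) * (3 * k + 1) ≤ 2 * m then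
        (-1 : ℤ) ^ (k + 1) * ((m : ℤ) + 1 - (k : ℤ) * (3 * k + 1) / 2) else 0)
      = - (sg (k:ℤ) * (if gp (k:ℤ) ≤ (m:ℤ) then ((m:ℤ) + 1 - gp (k:ℤ)) else 0)) := by
    intro k hk
    have hX : 2 * gp (k:ℤ) = (k:ℤ) * (3 * (k:ℤ) + 1) := two_gp (k:ℤ)
    have hgpk : gp (k:ℤ) = (k:ℤ) * (3 * (k:ℤ) + 1) / 2 := rfl
    have hsg : sg (k:ℤ) = (-1:ℤ) ^ k := by rw [sg, Int.natAbs_natCast]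
    by_cases hc : (k : ℤ) * (3 * k + 1) ≤ 2 * m
    · rw [if_pos hc, if_pos (by omega), hsg, ← hgpk, pow_succ]
      ring
    · rw [if_neg hc, if_neg (by omega)]
      ring
  have hneg' : ∀ k ∈ Finset.Icc 1 m,
      (if (k : ℤ) * (3 * k + -1) ≤ 2 * m then
        (-1 : ℤ) ^ (k + 1) * ((m : ℤ) + 1 - (k : ℤ) * (3 * k + -1) / 2) else 0)
      = - (sg (-(k:ℤ)) * (if gp (-(k:ℤ)) ≤ (m:ℤ) then ((m:ℤ) + 1 - gp (-(k:ℤ))) else 0)) := by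
    intro k hk
    have hX : 2 * gp (-(k:ℤ)) = (k:ℤ) * (3 * (k:ℤ) + -1) := by rw [two_gp]; ring
    have hgpk : gp (-(k:ℤ)) = (k:ℤ) * (3 * (k:ℤ) + -1) / 2 := by omega
    have hsg : sg (-(k:ℤ)) = (-1:ℤ) ^ k := by rw [sg, Int.natAbs_neg, Int.natAbs_natCast]
    by_cases hc : (k : ℤ) * (3 * k + -1) ≤ 2 * m
    · rw [if_pos hc, if_pos (by omega), hsg, ← hgpk, pow_succ]
      ring
    · rw [if_neg hc, if_neg (by omega)]
      ring
  rw [Finset.sum_congr rfl hpos', Finset.sum_congr rfl hneg', Finset.sum_neg_distrib,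
    Finset.sum_neg_distrib]
  ring

lemma Bphi_eq' (m : ℕ) (X : ℤ) (hX : (m:ℤ) ≤ X) :
    Bphi m = ∑ j ∈ Finset.Icc (-X) X,
      sg j * (if gp j ≤ (m:ℤ) then ((m:ℤ) + 1 - gp j) else 0) := by
  rw [Bphi_eq]
  apply Finset.sum_subset (Finset.Icc_subset_Icc (by omega) hX)
  intro j hj hj2
  simp only [Finset.mem_Icc] at hj hj2
  have h1 : (m : ℤ) < (j.natAbs : ℤ) := by omega
  have h2 := natAbs_le_gp j
  rw [if_neg (by omega), mul_zero]

lemma inner_eq (d : ℕ) (G : ℤ) (hG : 0 ≤ G) :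
    ∑ k ∈ Finset.Icc 1 d, (partitionFun (d - k) : ℤ) * (if G ≤ (k:ℤ) - 1 then (k:ℤ) - G else 0)
    = ∑ w ∈ Finset.range d, ((d:ℤ) - w) * pz ((w:ℤ) - G) := by
  have step1 : ∑ k ∈ Finset.Icc 1 d,
      (partitionFun (d - k) : ℤ) * (if G ≤ (k:ℤ) - 1 then (k:ℤ) - G else 0)
      = ∑ u ∈ Finset.range d,
        (if (u:ℤ) + G ≤ (d:ℤ) - 1 then ((d:ℤ) - u - G) * (partitionFun u : ℤ) else 0) := by
    refine Finset.sum_nbij' (fun k => d - k) (fun u => d - u) ?_ ?_ ?_ ?_ ?_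
    · intro k hk; simp only [Finset.mem_Icc] at hk; simp only [Finset.mem_range]; (try dsimp only); omega
    · intro u hu; simp only [Finset.mem_range] at hu; simp only [Finset.mem_Icc]; (try dsimp only); omega
    · intro k hk; simp only [Finset.mem_Icc] at hk; (try dsimp only); omega
    · intro u hu; simp only [Finset.mem_range] at hu; (try dsimp only); omega
    · intro k hk
      simp only [Finset.mem_Icc] at hk
      (try dsimp only)
      have hcast : ((d - k : ℕ) : ℤ) = (d:ℤ) - k := by omega
      by_cases h : G ≤ (k:ℤ) - 1
      · rw [if_pos h, if_pos (by omega), mul_comm]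
        congr 1
        omega
      · rw [if_neg h, if_neg (by omega), mul_zero]
  have step2 : ∑ w ∈ Finset.range d, ((d:ℤ) - w) * pz ((w:ℤ) - G)
      = ∑ w ∈ Finset.range d,
        (if G ≤ (w:ℤ) then ((d:ℤ) - w) * (partitionFun ((w:ℤ) - G).toNat : ℤ) else 0) := by
    apply Finset.sum_congr rfl
    intro w hw
    by_cases h : G ≤ (w:ℤ)
    · rw [if_pos h, pz, if_pos (by omega)]
    · rw [if_neg h, pz, if_neg (by omega), mul_zero]
  rw [step1, step2, ← Finset.sum_filter, ← Finset.sum_filter]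
  refine Finset.sum_nbij' (fun u => u + G.toNat) (fun w => w - G.toNat) ?_ ?_ ?_ ?_ ?_
  · intro u hu
    simp only [Finset.mem_filter, Finset.mem_range] at hu ⊢
    (try dsimp only)
    omega
  · intro w hw
    simp only [Finset.mem_filter, Finset.mem_range] at hw ⊢
    (try dsimp only)
    omega
  · intro u hu; simp only [Finset.mem_filter, Finset.mem_range] at hu; (try dsimp only); omega
  · intro w hw; simp only [Finset.mem_filter, Finset.mem_range] at hw; (try dsimp only); omega
  · intro u hu
    simp only [Finset.mem_filter, Finset.mem_range] at hu
    (try dsimp only)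
    have h1 : ((u + G.toNat : ℕ) : ℤ) = (u:ℤ) + G := by omega
    rw [h1]
    have h2 : ((u:ℤ) + G - G).toNat = u := by omega
    rw [h2]
    congr 1
    ring

lemma key_conv (d : ℕ) (hd : 1 ≤ d) :
    ∑ k ∈ Finset.Icc 1 d, (partitionFun (d - k) : ℤ) * Bphi (k - 1) = d := by
  have hBk : ∀ k ∈ Finset.Icc 1 d, (partitionFun (d - k) : ℤ) * Bphi (k - 1)
      = ∑ j ∈ Finset.Icc (-(d:ℤ)) (d:ℤ),
          sg j * ((partitionFun (d - k) : ℤ) * (if gp j ≤ (k:ℤ) - 1 then (k:ℤ) - gp j else 0)) := by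
    intro k hk
    simp only [Finset.mem_Icc] at hk
    rw [Bphi_eq' (k - 1) (d:ℤ) (by omega), Finset.mul_sum]
    apply Finset.sum_congr rfl
    intro j hj
    have hc : ((k - 1 : ℕ) : ℤ) = (k:ℤ) - 1 := by omega
    rw [hc]
    have hval : (k:ℤ) - 1 + 1 - gp j = (k:ℤ) - gp j := by ring
    rw [hval]
    ring
  rw [Finset.sum_congr rfl hBk, Finset.sum_comm]
  have h2 : ∀ j ∈ Finset.Icc (-(d:ℤ)) (d:ℤ),
      ∑ k ∈ Finset.Icc 1 d,
        sg j * ((partitionFun (d - k) : ℤ) * (if gp j ≤ (k:ℤ) - 1 then (k:ℤ) - gp j else 0))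
      = ∑ w ∈ Finset.range d, ((d:ℤ) - w) * (sg j * pz ((w:ℤ) - gp j)) := by
    intro j hj
    rw [← Finset.mul_sum, inner_eq d (gp j) (gp_nonneg j), Finset.mul_sum]
    apply Finset.sum_congr rfl
    intro w hw
    ring
  rw [Finset.sum_congr rfl h2, Finset.sum_comm]
  have h3 : ∀ w ∈ Finset.range d,
      ∑ j ∈ Finset.Icc (-(d:ℤ)) (d:ℤ), ((d:ℤ) - w) * (sg j * pz ((w:ℤ) - gp j))
      = ((d:ℤ) - w) * (if w = 0 then 1 else 0) := by
    intro w hw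
    simp only [Finset.mem_range] at hw
    rw [← Finset.mul_sum, Z_eval w (d:ℤ) (by omega)]
  rw [Finset.sum_congr rfl h3]
  rw [Finset.sum_eq_single 0]
  · simp
  · intro w hw hne
    rw [if_neg hne, mul_zero]
  · intro h0
    exact absurd (Finset.mem_range.2 (by omega)) h0

theorem statement12 (n : ℕ) (hn : 1 ≤ n) :
    (Nat.totient n : ℤ) = ∑ k ∈ Finset.Icc 1 n,
      (∑ d ∈ n.divisors,
          (if k ≤ d then (partitionFun (d - k) : ℤ) else 0) * moebius (n / d)) *
        Bphi (k - 1) := by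
  have hmu : (Nat.totient n : ℤ) = ∑ d ∈ n.divisors, (moebius (n / d) : ℤ) * d := by
    have hinv := (ArithmeticFunction.sum_eq_iff_sum_mul_moebius_eq
      (R := ℤ) (f := fun i => (Nat.totient i : ℤ)) (g := fun i => (i : ℤ))).1
      (fun m hm => by exact_mod_cast congrArg (Nat.cast (R := ℤ)) (Nat.sum_totient m))
      n (by omega)
    simp only [Int.cast_id] at hinv
    rw [← hinv, Nat.sum_divisorsAntidiagonal' (f := fun a b => (moebius a : ℤ) * b)]
  rw [hmu]
  have hdist : ∀ k ∈ Finset.Icc 1 n,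
      (∑ d ∈ n.divisors, (if k ≤ d then (partitionFun (d - k) : ℤ) else 0) * moebius (n / d))
        * Bphi (k - 1)
      = ∑ d ∈ n.divisors, (moebius (n / d) : ℤ) *
          (if k ≤ d then (partitionFun (d - k) : ℤ) * Bphi (k - 1) else 0) := by
    intro k hk
    rw [Finset.sum_mul]
    apply Finset.sum_congr rfl
    intro d hd
    by_cases h : k ≤ d
    · rw [if_pos h, if_pos h]; ring
    · rw [if_neg h, if_neg h]; ring
  rw [Finset.sum_congr rfl hdist, Finset.sum_comm]
  apply Finset.sum_congr rfl
  intro d hd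
  have hdpos : 1 ≤ d := Nat.pos_of_mem_divisors hd
  have hdle : d ≤ n := Nat.divisor_le hd
  rw [← Finset.mul_sum]
  have hfilter : ∑ k ∈ Finset.Icc 1 n,
      (if k ≤ d then (partitionFun (d - k) : ℤ) * Bphi (k - 1) else 0)
      = ∑ k ∈ Finset.Icc 1 d, (partitionFun (d - k) : ℤ) * Bphi (k - 1) := by
    rw [← Finset.sum_filter]
    apply Finset.sum_congr _ (fun x _ => rfl)
    ext x
    simp only [Finset.mem_filter, Finset.mem_Icc]
    omega
  rw [hfilter, key_conv d hdpos]
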